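/- For integers n ≥ 2 and n₁ + n₂ = n with closed convex cones C₁ ⊆ ℝ^{n₁}, C₂ ⊆ ℝ^{n₂}, the spherical intrinsic volumes of the product cone satisfy the convolution identity V_j(C₁ × C₂) = Σ_{i=0}^{j} V_i(C₁) · V_{j−i}(C₂) for 0 ≤ j ≤ n, in the case where C₁ and C₂ are polyhedral. -/

import Mathlib

open MeasureTheory Module Finset

/-- The standard Gaussian measure on a Euclidean space. -/
noncomputable def stdGaussian (ι : Type*) [Fintype ι] : Measure (EuclideanSpace ℝ ι) :=
  Measure.map (MeasurableEquiv.toLp 2 (ι → ℝ))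
    (Measure.pi fun _ : ι => ProbabilityTheory.gaussianReal 0 1)

/-- The event that the metric projection of `g` onto `C` lies in the relative interior of
a `j`-dimensional face of `C`.  (Faces are extreme subsets; the dimension of a face is
the rank of its `vectorSpan`; the metric projection of `g` is the point of `C` nearest
to `g`.) -/
def faceEvent {ι : Type*} [Fintype ι] (C : Set (EuclideanSpace ℝ ι)) (j : ℕ) :
    Set (EuclideanSpace ℝ ι) :=
  {g | ∃ p F, IsExtreme ℝ C F ∧ finrank ℝ (vectorSpan ℝ F) = j ∧
      p ∈ intrinsicInterior ℝ F ∧ ∀ y ∈ C, dist g p ≤ dist g y}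

/-- The `j`-th intrinsic volume of a polyhedral cone `C`:
`V_j(C) = P[Π_C(g) ∈ relint F, F a j-dimensional face]` for `g` standard Gaussian. -/
noncomputable def polyV {ι : Type*} [Fintype ι] (j : ℕ) (C : Set (EuclideanSpace ℝ ι)) : ℝ :=
  (stdGaussian ι (faceEvent C j)).toReal

/-- A polyhedral cone: a finite intersection of closed linear halfspaces. -/
def IsPolyhedralCone {ι : Type*} [Fintype ι] (C : Set (EuclideanSpace ℝ ι)) : Prop :=
  ∃ s : Finset (EuclideanSpace ℝ ι), C = {x | ∀ v ∈ s, (inner ℝ v x : ℝ) ≤ 0}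

set_option maxHeartbeats 1000000
set_option linter.unusedSectionVars false

section
variable {ι : Type*} [Fintype ι]

/-- The cone cut out by the linear inequalities `⟪v, x⟫ ≤ 0`, `v ∈ s`. -/
def coneOf (s : Finset (EuclideanSpace ℝ ι)) : Set (EuclideanSpace ℝ ι) :=
  {x | ∀ v ∈ s, (inner ℝ v x : ℝ) ≤ 0}

/-- The minimal face of the cone of `s` containing `p`. -/
def Fface (s : Finset (EuclideanSpace ℝ ι)) (p : EuclideanSpace ℝ ι) :
    Set (EuclideanSpace ℝ ι) :=
  {x | (∀ v ∈ s, (inner ℝ v x : ℝ) ≤ 0) ∧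
    ∀ v ∈ s, (inner ℝ v p : ℝ) = 0 → (inner ℝ v x : ℝ) = 0}

theorem zero_mem_coneOf (s : Finset (EuclideanSpace ℝ ι)) : 0 ∈ coneOf s := by
  intro v hv
  simp [inner_zero_right]

theorem coneOf_closed (s : Finset (EuclideanSpace ℝ ι)) : IsClosed (coneOf s) := by
  have : coneOf s = ⋂ v ∈ s, {x : EuclideanSpace ℝ ι | (inner ℝ v x : ℝ) ≤ 0} := by
    ext x; simp [coneOf]
  rw [this]
  exact isClosed_biInter fun v _ =>
    isClosed_le (Continuous.inner continuous_const continuous_id) continuous_const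

theorem coneOf_convex (s : Finset (EuclideanSpace ℝ ι)) : Convex ℝ (coneOf s) := by
  intro x hx y hy a b ha hb hab v hv
  have h1 := hx v hv
  have h2 := hy v hv
  rw [inner_add_right, real_inner_smul_right, real_inner_smul_right]
  nlinarith

theorem zero_mem_Fface (s : Finset (EuclideanSpace ℝ ι)) (p : EuclideanSpace ℝ ι) :
    0 ∈ Fface s p := by
  constructor <;> intro v hv <;> simp [inner_zero_right]

theorem Fface_mem_self {s : Finset (EuclideanSpace ℝ ι)} {p : EuclideanSpace ℝ ι}
    (hp : p ∈ coneOf s) : p ∈ Fface s p :=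
  ⟨hp, fun _ _ h => h⟩

theorem isExtreme_Fface (s : Finset (EuclideanSpace ℝ ι)) (p : EuclideanSpace ℝ ι) :
    IsExtreme ℝ (coneOf s) (Fface s p) := by
  constructor
  · exact fun x hx => hx.1
  · rintro x₁ h₁ x₂ h₂ x hx ⟨a, b, ha, hb, hab, hx'⟩
    have key : ∀ v ∈ s, (inner ℝ v p : ℝ) = 0 →
        (inner ℝ v x₁ : ℝ) = 0 ∧ (inner ℝ v x₂ : ℝ) = 0 := by
      intro v hv hvp
      have h0 : (inner ℝ v x : ℝ) = 0 := hx.2 v hv hvp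
      rw [← hx'] at h0
      rw [inner_add_right, real_inner_smul_right, real_inner_smul_right] at h0
      have c1 := h₁ v hv
      have c2 := h₂ v hv
      constructor <;> nlinarith
    exact ⟨h₁, fun v hv hvp => (key v hv hvp).1⟩

theorem inner_eq_zero_of_mem_affineSpan_Fface {s : Finset (EuclideanSpace ℝ ι)}
    {p v : EuclideanSpace ℝ ι} (hv : v ∈ s) (hvp : (inner ℝ v p : ℝ) = 0)
    {x : EuclideanSpace ℝ ι} (hx : x ∈ affineSpan ℝ (Fface s p)) : (inner ℝ v x : ℝ) = 0 := by
  set K : Submodule ℝ (EuclideanSpace ℝ ι) := LinearMap.ker (innerₛₗ ℝ v) with hK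
  have hle : affineSpan ℝ (Fface s p) ≤ K.toAffineSubspace := by
    rw [affineSpan_le]
    intro y hy
    have : (inner ℝ v y : ℝ) = 0 := hy.2 v hv hvp
    simpa [hK, Submodule.mem_toAffineSubspace, LinearMap.mem_ker] using this
  have := hle hx
  simpa [hK, Submodule.mem_toAffineSubspace, LinearMap.mem_ker] using this

theorem mem_intrinsicInterior_Fface {s : Finset (EuclideanSpace ℝ ι)}
    {p : EuclideanSpace ℝ ι} (hp : p ∈ coneOf s) :
    p ∈ intrinsicInterior ℝ (Fface s p) := by
  have hpF : p ∈ Fface s p := Fface_mem_self hp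
  rw [mem_intrinsicInterior]
  refine ⟨⟨p, subset_affineSpan ℝ _ hpF⟩, ?_, rfl⟩
  set W : Set (EuclideanSpace ℝ ι) :=
    {x | ∀ v ∈ s, (inner ℝ v p : ℝ) ≠ 0 → (inner ℝ v x : ℝ) < 0} with hW
  have hWopen : IsOpen W := by
    have : W = ⋂ v ∈ s, {x : EuclideanSpace ℝ ι | (inner ℝ v p : ℝ) ≠ 0 → (inner ℝ v x : ℝ) < 0} := by
      ext x; simp [hW]
    rw [this]
    refine isOpen_biInter_finset fun v hv => ?_
    by_cases hvp : (inner ℝ v p : ℝ) = 0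
    · simp [hvp]
    · have : {x : EuclideanSpace ℝ ι | (inner ℝ v p : ℝ) ≠ 0 → (inner ℝ v x : ℝ) < 0}
          = {x | (inner ℝ v x : ℝ) < 0} := by
        ext x
        exact ⟨fun h => h hvp, fun h _ => h⟩
      rw [this]
      exact isOpen_lt (Continuous.inner continuous_const continuous_id) continuous_const
  refine mem_interior.2 ⟨Subtype.val ⁻¹' W, ?_, hWopen.preimage continuous_subtype_val, ?_⟩
  · rintro ⟨z, hz⟩ hzW
    show z ∈ Fface s p
    refine ⟨fun v hv => ?_, fun v hv hvp => inner_eq_zero_of_mem_affineSpan_Fface hv hvp hz⟩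
    by_cases hvp : (inner ℝ v p : ℝ) = 0
    · exact le_of_eq (inner_eq_zero_of_mem_affineSpan_Fface hv hvp hz)
    · exact le_of_lt (hzW v hv hvp)
  · show p ∈ W
    intro v hv hvp
    exact lt_of_le_of_ne (hp v hv) hvp

end

section



variable {ι : Type*} [Fintype ι]

open scoped Classical in
/-- The metric projection onto `C` (junk value `0` if no nearest point exists). -/
noncomputable def projPt (C : Set (EuclideanSpace ℝ ι)) (g : EuclideanSpace ℝ ι) :
    EuclideanSpace ℝ ι :=
  if h : ∃ p, p ∈ C ∧ ∀ y ∈ C, dist g p ≤ dist g y then h.choose else 0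

theorem projPt_exists {C : Set (EuclideanSpace ℝ ι)} (hne : C.Nonempty) (hcl : IsClosed C)
    (hco : Convex ℝ C) (g : EuclideanSpace ℝ ι) :
    ∃ p, p ∈ C ∧ ∀ y ∈ C, dist g p ≤ dist g y := by
  obtain ⟨v, hv, hmin⟩ := exists_norm_eq_iInf_of_complete_convex hne hcl.isComplete hco g
  refine ⟨v, hv, fun y hy => ?_⟩
  have hbdd : BddBelow (Set.range fun w : C => ‖g - (w : EuclideanSpace ℝ ι)‖) := by
    refine ⟨0, ?_⟩
    rintro _ ⟨w, rfl⟩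
    exact norm_nonneg _
  have h2 := ciInf_le hbdd (⟨y, hy⟩ : C)
  rw [← hmin] at h2
  simpa [dist_eq_norm] using h2

theorem nearest_inner_le {C : Set (EuclideanSpace ℝ ι)} (hco : Convex ℝ C)
    {g p : EuclideanSpace ℝ ι} (hp : p ∈ C) (hmin : ∀ y ∈ C, dist g p ≤ dist g y) :
    ∀ w ∈ C, (inner ℝ (g - p) (w - p) : ℝ) ≤ 0 := by
  have hne : Nonempty C := ⟨⟨p, hp⟩⟩
  have hbdd : BddBelow (Set.range fun w : C => ‖g - (w : EuclideanSpace ℝ ι)‖) := by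
    refine ⟨0, ?_⟩
    rintro _ ⟨w, rfl⟩
    exact norm_nonneg _
  have hinf : ‖g - p‖ = ⨅ w : C, ‖g - w‖ := by
    refine le_antisymm (le_ciInf fun w => ?_) (ciInf_le hbdd (⟨p, hp⟩ : C))
    simpa [dist_eq_norm] using hmin w w.2
  exact (norm_eq_iInf_iff_real_inner_le_zero hco hp).1 hinf

theorem nearest_unique {C : Set (EuclideanSpace ℝ ι)} (hco : Convex ℝ C)
    {g p q : EuclideanSpace ℝ ι} (hp : p ∈ C) (hq : q ∈ C)
    (hminp : ∀ y ∈ C, dist g p ≤ dist g y) (hminq : ∀ y ∈ C, dist g q ≤ dist g y) :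
    p = q := by
  have h1 := nearest_inner_le hco hp hminp q hq
  have h2 := nearest_inner_le hco hq hminq p hp
  have key : (inner ℝ (q - p) (q - p) : ℝ) ≤ 0 := by
    have e1 : (inner ℝ (q - g) (q - p) : ℝ) = inner ℝ (g - q) (p - q) := by
      rw [← inner_neg_neg (𝕜 := ℝ)]
      congr 1 <;> abel
    have e2 : (inner ℝ (q - p) (q - p) : ℝ)
        = inner ℝ (g - p) (q - p) + inner ℝ (q - g) (q - p) := by
      rw [← inner_add_left]
      congr 1
      abel
    rw [e2, e1]
    linarith
  have : q - p = 0 := real_inner_self_nonpos.1 key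
  have := sub_eq_zero.1 this
  exact this.symm

theorem projPt_spec {C : Set (EuclideanSpace ℝ ι)} (hne : C.Nonempty) (hcl : IsClosed C)
    (hco : Convex ℝ C) (g : EuclideanSpace ℝ ι) :
    projPt C g ∈ C ∧ ∀ y ∈ C, dist g (projPt C g) ≤ dist g y := by
  classical
  rw [projPt, dif_pos (projPt_exists hne hcl hco g)]
  exact (projPt_exists hne hcl hco g).choose_spec

theorem projPt_eq {C : Set (EuclideanSpace ℝ ι)} (hne : C.Nonempty) (hcl : IsClosed C)
    (hco : Convex ℝ C) {g p : EuclideanSpace ℝ ι} (hp : p ∈ C)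
    (hmin : ∀ y ∈ C, dist g p ≤ dist g y) : projPt C g = p := by
  obtain ⟨h1, h2⟩ := projPt_spec hne hcl hco g
  exact nearest_unique hco h1 hp h2 hmin

theorem projPt_lipschitz {C : Set (EuclideanSpace ℝ ι)} (hne : C.Nonempty) (hcl : IsClosed C)
    (hco : Convex ℝ C) : LipschitzWith 1 (projPt C) := by
  refine LipschitzWith.of_dist_le_mul fun g g' => ?_
  obtain ⟨hp, hpm⟩ := projPt_spec hne hcl hco g
  obtain ⟨hq, hqm⟩ := projPt_spec hne hcl hco g'
  set p := projPt C g
  set q := projPt C g'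
  have h1 : (inner ℝ (g - p) (q - p) : ℝ) ≤ 0 := nearest_inner_le hco hp hpm q hq
  have h2 : (inner ℝ (g' - q) (p - q) : ℝ) ≤ 0 := nearest_inner_le hco hq hqm p hp
  have key : ‖q - p‖ ^ 2 ≤ (inner ℝ (g' - g) (q - p) : ℝ) := by
    have e1 : (inner ℝ (q - g') (q - p) : ℝ) = inner ℝ (g' - q) (p - q) := by
      rw [← inner_neg_neg (𝕜 := ℝ)]; congr 1 <;> abel
    have e2 : (inner ℝ (q - p) (q - p) : ℝ)
        = inner ℝ (g - p) (q - p) + inner ℝ (q - g') (q - p) + inner ℝ (g' - g) (q - p) := by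
      rw [← inner_add_left, ← inner_add_left]; congr 1; abel
    have e3 : (inner ℝ (q - p) (q - p) : ℝ) = ‖q - p‖ ^ 2 := real_inner_self_eq_norm_sq _
    rw [← e3, e2, e1]
    linarith
  have hle : ‖q - p‖ ^ 2 ≤ ‖g' - g‖ * ‖q - p‖ :=
    le_trans key (real_inner_le_norm _ _)
  have : ‖q - p‖ ≤ ‖g' - g‖ := by
    rcases eq_or_lt_of_le (norm_nonneg (q - p)) with h | h
    · rw [← h]; exact norm_nonneg _
    · nlinarith
  calc dist p q = ‖q - p‖ := by rw [dist_eq_norm, norm_sub_rev]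
    _ ≤ ‖g' - g‖ := this
    _ = 1 * dist g g' := by rw [one_mul, dist_eq_norm, norm_sub_rev]

end

section
variable {ι : Type*} [Fintype ι]

theorem mem_openSegment_smul_aux {E : Type*} [NormedAddCommGroup E] [NormedSpace ℝ E]
    {p q : E} {δ : ℝ} (hδ : 0 < δ) : p ∈ openSegment ℝ q (δ • (p - q) + p) := by
  have h : (1:ℝ) + δ ≠ 0 := by positivity
  refine ⟨δ/(1+δ), 1/(1+δ), by positivity, by positivity, by (field_simp; try ring), ?_⟩
  match_scalars <;> (field_simp; try ring)

theorem extreme_eq_Fface {s : Finset (EuclideanSpace ℝ ι)} {F : Set (EuclideanSpace ℝ ι)}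
    {p : EuclideanSpace ℝ ι} (hF : IsExtreme ℝ (coneOf s) F)
    (hp : p ∈ intrinsicInterior ℝ F) : F = Fface s p := by
  obtain ⟨y, hy, hyp⟩ := mem_intrinsicInterior.1 hp
  rw [mem_interior_iff_mem_nhds, Metric.mem_nhds_iff] at hy
  obtain ⟨ε, hε, hball⟩ := hy
  have hpF : p ∈ F := intrinsicInterior_subset hp
  have hpC : p ∈ coneOf s := hF.1 hpF
  have key : ∀ x, x ∈ affineSpan ℝ F → dist x p < ε → x ∈ F := by
    intro x hx hdx
    have hb : (⟨x, hx⟩ : affineSpan ℝ F) ∈ Metric.ball y ε := by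
      rw [Metric.mem_ball, Subtype.dist_eq, hyp]
      exact hdx
    exact hball hb
  apply Set.Subset.antisymm
  · intro q hq
    by_cases hqp : q = p
    · subst hqp
      exact Fface_mem_self hpC
    have hpq : (0:ℝ) < ‖p - q‖ := by
      rw [norm_pos_iff, sub_ne_zero]
      exact fun h => hqp h.symm
    set δ := ε / (2 * ‖p - q‖) with hδdef
    have hδ : 0 < δ := by positivity
    set r := δ • (p - q) + p with hrdef
    have hrspan : r ∈ affineSpan ℝ F := by
      have h := AffineSubspace.smul_vsub_vadd_mem (affineSpan ℝ F) δ
        (subset_affineSpan ℝ F hpF) (subset_affineSpan ℝ F hq) (subset_affineSpan ℝ F hpF)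
      simpa [vsub_eq_sub, vadd_eq_add, hrdef] using h
    have hrF : r ∈ F := by
      apply key r hrspan
      have hd : dist r p = δ * ‖p - q‖ := by
        rw [dist_eq_norm, hrdef]
        simp [norm_smul, abs_of_pos hδ]
      rw [hd, hδdef]
      have he : ε / (2 * ‖p - q‖) * ‖p - q‖ = ε / 2 := by
        field_simp
      rw [he]
      linarith
    have hseg : p ∈ openSegment ℝ q r := mem_openSegment_smul_aux hδ
    exact ((isExtreme_Fface s p).2 (hF.1 hq) (hF.1 hrF) (Fface_mem_self hpC) hseg)
  · intro q hq
    by_cases hqp : q = p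
    · subst hqp
      exact hpF
    set T := {t : ℝ | ∀ v ∈ s, (inner ℝ v p : ℝ) ≠ 0 →
      (inner ℝ v (t • (p - q) + p) : ℝ) < 0} with hT
    have hTopen : IsOpen T := by
      have : T = ⋂ v ∈ s, {t : ℝ | (inner ℝ v p : ℝ) ≠ 0 →
          (inner ℝ v (t • (p - q) + p) : ℝ) < 0} := by
        ext t; simp [hT]
      rw [this]
      refine isOpen_biInter_finset fun v hv => ?_
      by_cases hvp : (inner ℝ v p : ℝ) = 0
      · have : {t : ℝ | (inner ℝ v p : ℝ) ≠ 0 → (inner ℝ v (t • (p - q) + p) : ℝ) < 0}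
            = Set.univ := by
          ext t
          simp only [Set.mem_setOf_eq, Set.mem_univ, iff_true]
          intro h
          exact absurd hvp h
        rw [this]; exact isOpen_univ
      · have : {t : ℝ | (inner ℝ v p : ℝ) ≠ 0 → (inner ℝ v (t • (p - q) + p) : ℝ) < 0}
            = {t : ℝ | (inner ℝ v (t • (p - q) + p) : ℝ) < 0} := by
          ext t
          exact ⟨fun h => h hvp, fun h _ => h⟩
        rw [this]
        exact isOpen_lt (Continuous.inner continuous_const
          ((continuous_id.smul continuous_const).add continuous_const)) continuous_const
    have h0T : (0:ℝ) ∈ T := by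
      intro v hv hvp
      have : (0:ℝ) • (p - q) + p = p := by simp
      rw [this]
      exact lt_of_le_of_ne (hpC v hv) hvp
    obtain ⟨η, hη, hball2⟩ := Metric.mem_nhds_iff.1 (hTopen.mem_nhds h0T)
    have hδT : η / 2 ∈ T := by
      apply hball2
      rw [Metric.mem_ball, Real.dist_eq]
      rw [sub_zero, abs_of_pos (by positivity)]
      linarith
    set δ := η / 2 with hδdef
    have hδ : 0 < δ := by positivity
    set r := δ • (p - q) + p with hrdef
    have hrC : r ∈ coneOf s := by
      intro v hv
      by_cases hvp : (inner ℝ v p : ℝ) = 0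
      · have hq0 := hq.2 v hv hvp
        rw [hrdef, inner_add_right, real_inner_smul_right, inner_sub_right, hvp, hq0]
        norm_num
      · exact le_of_lt (hδT v hv hvp)
    have hseg : p ∈ openSegment ℝ q r := mem_openSegment_smul_aux hδ
    exact (hF.2 hq.1 hrC hpF hseg)

end

section

theorem vectorSpan_eq_span' {E : Type*} [NormedAddCommGroup E] [NormedSpace ℝ E] {A : Set E}
    (h0 : (0:E) ∈ A) : vectorSpan ℝ A = Submodule.span ℝ A := by
  apply le_antisymm
  · rw [vectorSpan_def]
    apply Submodule.span_le.2
    rintro z hz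
    rw [Set.mem_vsub] at hz
    obtain ⟨a, ha, b, hb, rfl⟩ := hz
    exact sub_mem (Submodule.subset_span ha) (Submodule.subset_span hb)
  · apply Submodule.span_le.2
    intro a ha
    have h := vsub_mem_vectorSpan ℝ ha h0
    simpa [vsub_eq_sub] using h

variable {ι₁ ι₂ : Type*} [Fintype ι₁] [Fintype ι₂]

/-- Extension by zero on the left block. -/
noncomputable def inlMap (ι₁ ι₂ : Type*) [Fintype ι₁] [Fintype ι₂] :
    EuclideanSpace ℝ ι₁ →ₗ[ℝ] EuclideanSpace ℝ (ι₁ ⊕ ι₂) where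
  toFun v := WithLp.toLp 2 (Sum.elim v.ofLp 0)
  map_add' v w := by
    ext i
    cases i <;> simp [PiLp.add_apply]
  map_smul' c v := by
    ext i
    cases i <;> simp [PiLp.smul_apply]

/-- Extension by zero on the right block. -/
noncomputable def inrMap (ι₁ ι₂ : Type*) [Fintype ι₁] [Fintype ι₂] :
    EuclideanSpace ℝ ι₂ →ₗ[ℝ] EuclideanSpace ℝ (ι₁ ⊕ ι₂) where
  toFun v := WithLp.toLp 2 (Sum.elim 0 v.ofLp)
  map_add' v w := by
    ext i
    cases i <;> simp [PiLp.add_apply]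
  map_smul' c v := by
    ext i
    cases i <;> simp [PiLp.smul_apply]

theorem inlMap_injective : Function.Injective (inlMap ι₁ ι₂) := by
  intro v w h
  ext i
  exact congrArg (fun z => z (Sum.inl i)) h

theorem inrMap_injective : Function.Injective (inrMap ι₁ ι₂) := by
  intro v w h
  ext i
  exact congrArg (fun z => z (Sum.inr i)) h

theorem finrank_prodSet {A : Set (EuclideanSpace ℝ ι₁)} {B : Set (EuclideanSpace ℝ ι₂)}
    (h0A : (0 : EuclideanSpace ℝ ι₁) ∈ A) (h0B : (0 : EuclideanSpace ℝ ι₂) ∈ B) :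
    finrank ℝ (vectorSpan ℝ {x : EuclideanSpace ℝ (ι₁ ⊕ ι₂) |
        (WithLp.toLp 2 (fun i => x (Sum.inl i)) : EuclideanSpace ℝ ι₁) ∈ A ∧
        (WithLp.toLp 2 (fun i => x (Sum.inr i)) : EuclideanSpace ℝ ι₂) ∈ B})
      = finrank ℝ (vectorSpan ℝ A) + finrank ℝ (vectorSpan ℝ B) := by
  set G : Set (EuclideanSpace ℝ (ι₁ ⊕ ι₂)) := {x |
      (WithLp.toLp 2 (fun i => x (Sum.inl i)) : EuclideanSpace ℝ ι₁) ∈ A ∧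
      (WithLp.toLp 2 (fun i => x (Sum.inr i)) : EuclideanSpace ℝ ι₂) ∈ B} with hG
  have h0G : (0 : EuclideanSpace ℝ (ι₁ ⊕ ι₂)) ∈ G := by
    constructor
    · show (WithLp.toLp 2 (fun i => (0 : EuclideanSpace ℝ (ι₁ ⊕ ι₂)) (Sum.inl i)) : EuclideanSpace ℝ ι₁) ∈ A
      convert h0A <;> simp [inlMap, inrMap]
    · show (WithLp.toLp 2 (fun i => (0 : EuclideanSpace ℝ (ι₁ ⊕ ι₂)) (Sum.inr i)) : EuclideanSpace ℝ ι₂) ∈ B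
      convert h0B <;> simp [inlMap, inrMap]
  rw [vectorSpan_eq_span' h0G, vectorSpan_eq_span' h0A, vectorSpan_eq_span' h0B]
  have hspan : Submodule.span ℝ G =
      (Submodule.span ℝ A).map (inlMap ι₁ ι₂) ⊔ (Submodule.span ℝ B).map (inrMap ι₁ ι₂) := by
    apply le_antisymm
    · apply Submodule.span_le.2
      intro x hx
      have hdecomp : x = inlMap ι₁ ι₂ (WithLp.toLp 2 (fun i => x (Sum.inl i))) +
          inrMap ι₁ ι₂ (WithLp.toLp 2 (fun i => x (Sum.inr i))) := by
        ext i
        cases i <;> simp [inlMap, inrMap, PiLp.add_apply]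
      rw [hdecomp]
      exact Submodule.add_mem _
        (Submodule.mem_sup_left (Submodule.mem_map_of_mem (Submodule.subset_span hx.1)))
        (Submodule.mem_sup_right (Submodule.mem_map_of_mem (Submodule.subset_span hx.2)))
    · apply sup_le
      · rw [Submodule.map_span]
        apply Submodule.span_mono
        rintro _ ⟨a, ha, rfl⟩
        constructor
        · show (WithLp.toLp 2 (fun i => (inlMap ι₁ ι₂ a) (Sum.inl i)) : EuclideanSpace ℝ ι₁) ∈ A
          convert ha <;> simp [inlMap, inrMap]
        · show (WithLp.toLp 2 (fun i => (inlMap ι₁ ι₂ a) (Sum.inr i)) : EuclideanSpace ℝ ι₂) ∈ B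
          convert h0B <;> simp [inlMap, inrMap]
      · rw [Submodule.map_span]
        apply Submodule.span_mono
        rintro _ ⟨b, hb, rfl⟩
        constructor
        · show (WithLp.toLp 2 (fun i => (inrMap ι₁ ι₂ b) (Sum.inl i)) : EuclideanSpace ℝ ι₁) ∈ A
          convert h0A <;> simp [inlMap, inrMap]
        · show (WithLp.toLp 2 (fun i => (inrMap ι₁ ι₂ b) (Sum.inr i)) : EuclideanSpace ℝ ι₂) ∈ B
          convert hb <;> simp [inlMap, inrMap]
  have hinf : (Submodule.span ℝ A).map (inlMap ι₁ ι₂) ⊓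
      (Submodule.span ℝ B).map (inrMap ι₁ ι₂) = ⊥ := by
    rw [eq_bot_iff]
    rintro x ⟨⟨a, _, rfl⟩, ⟨b, _, hb⟩⟩
    have hz : inlMap ι₁ ι₂ a = 0 := by
      ext i
      cases i with
      | inl i =>
        have := congrArg (fun z => z (Sum.inl i)) hb.symm
        simpa [inlMap, inrMap] using this
      | inr i => simp [inlMap]
    rw [hz]
    exact Submodule.zero_mem ⊥
  have heq := Submodule.finrank_sup_add_finrank_inf_eq
    ((Submodule.span ℝ A).map (inlMap ι₁ ι₂)) ((Submodule.span ℝ B).map (inrMap ι₁ ι₂))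
  rw [hinf] at heq
  have e1 : finrank ℝ ((Submodule.span ℝ A).map (inlMap ι₁ ι₂)) =
      finrank ℝ (Submodule.span ℝ A) :=
    (LinearEquiv.finrank_eq (Submodule.equivMapOfInjective _ inlMap_injective _)).symm
  have e2 : finrank ℝ ((Submodule.span ℝ B).map (inrMap ι₁ ι₂)) =
      finrank ℝ (Submodule.span ℝ B) :=
    (LinearEquiv.finrank_eq (Submodule.equivMapOfInjective _ inrMap_injective _)).symm
  rw [hspan]
  simp only [finrank_bot] at heq
  omega

end

section

variable {ι : Type*} [Fintype ι]


theorem faceEvent_eq (s : Finset (EuclideanSpace ℝ ι)) (j : ℕ) :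
    faceEvent (coneOf s) j
      = {g | finrank ℝ (vectorSpan ℝ (Fface s (projPt (coneOf s) g))) = j} := by
  ext g
  have hne : (coneOf s).Nonempty := ⟨0, zero_mem_coneOf s⟩
  have hcl := coneOf_closed s
  have hco := coneOf_convex s
  obtain ⟨hPmem, hPmin⟩ := projPt_spec hne hcl hco g
  constructor
  · rintro ⟨p, F, hF, hdim, hrel, hmin⟩
    have hpC : p ∈ coneOf s := hF.1 (intrinsicInterior_subset hrel)
    have hpp : projPt (coneOf s) g = p := projPt_eq hne hcl hco hpC hmin
    show finrank ℝ (vectorSpan ℝ (Fface s (projPt (coneOf s) g))) = j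
    rw [hpp, ← extreme_eq_Fface hF hrel]
    exact hdim
  · intro h
    exact ⟨projPt (coneOf s) g, Fface s (projPt (coneOf s) g), isExtreme_Fface s _, h,
      mem_intrinsicInterior_Fface hPmem, hPmin⟩

/-- The faces defined by a subset of the constraints. -/
def faceSet (s S : Finset (EuclideanSpace ℝ ι)) : Set (EuclideanSpace ℝ ι) :=
  {x | (∀ v ∈ s, (inner ℝ v x : ℝ) ≤ 0) ∧ ∀ v ∈ S, (inner ℝ v x : ℝ) = 0}

theorem Fface_eq_faceSet {s S : Finset (EuclideanSpace ℝ ι)} (hS : S ⊆ s)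
    {p : EuclideanSpace ℝ ι} (hp : ∀ v ∈ s, ((inner ℝ v p : ℝ) = 0 ↔ v ∈ S)) :
    Fface s p = faceSet s S := by
  ext x
  constructor
  · rintro ⟨h1, h2⟩
    exact ⟨h1, fun v hv => h2 v (hS hv) ((hp v (hS hv)).2 hv)⟩
  · rintro ⟨h1, h2⟩
    exact ⟨h1, fun v hv hvp => h2 v ((hp v hv).1 hvp)⟩

theorem measurableSet_dimSet (s : Finset (EuclideanSpace ℝ ι)) (j : ℕ) :
    MeasurableSet {p : EuclideanSpace ℝ ι | finrank ℝ (vectorSpan ℝ (Fface s p)) = j} := by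
  classical
  have hpart : {p : EuclideanSpace ℝ ι | finrank ℝ (vectorSpan ℝ (Fface s p)) = j}
      = ⋃ S ∈ (s.powerset.filter
          (fun S => finrank ℝ (vectorSpan ℝ (faceSet s S)) = j) : Finset _),
          {p : EuclideanSpace ℝ ι | ∀ v ∈ s, ((inner ℝ v p : ℝ) = 0 ↔ v ∈ S)} := by
    ext p
    simp only [Set.mem_setOf_eq, Set.mem_iUnion, Finset.mem_filter, Finset.mem_powerset]
    constructor
    · intro h
      have hpat : ∀ v ∈ s, ((inner ℝ v p : ℝ) = 0 ↔
          v ∈ s.filter (fun v => (inner ℝ v p : ℝ) = 0)) := by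
        intro v hv
        rw [Finset.mem_filter]
        exact ⟨fun h' => ⟨hv, h'⟩, fun h' => h'.2⟩
      refine ⟨s.filter (fun v => (inner ℝ v p : ℝ) = 0), ⟨Finset.filter_subset _ _, ?_⟩, hpat⟩
      rw [← Fface_eq_faceSet (Finset.filter_subset _ _) hpat]
      exact h
    · rintro ⟨S, ⟨hSs, hSrank⟩, hSpat⟩
      rw [Fface_eq_faceSet hSs hSpat]
      exact hSrank
  rw [hpart]
  refine MeasurableSet.biUnion (Finset.countable_toSet _) fun S _ => ?_
  have : {p : EuclideanSpace ℝ ι | ∀ v ∈ s, ((inner ℝ v p : ℝ) = 0 ↔ v ∈ S)}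
      = ⋂ v ∈ (s : Set (EuclideanSpace ℝ ι)),
        {p : EuclideanSpace ℝ ι | ((inner ℝ v p : ℝ) = 0 ↔ v ∈ S)} := by
    ext p; simp
  rw [this]
  refine MeasurableSet.biInter (Finset.countable_toSet _) fun v _ => ?_
  by_cases hv : v ∈ S
  · have : {p : EuclideanSpace ℝ ι | ((inner ℝ v p : ℝ) = 0 ↔ v ∈ S)}
        = {p : EuclideanSpace ℝ ι | (inner ℝ v p : ℝ) = 0} := by
      ext p; simp [hv]
    rw [this]
    exact (isClosed_eq (Continuous.inner continuous_const continuous_id)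
      continuous_const).measurableSet
  · have : {p : EuclideanSpace ℝ ι | ((inner ℝ v p : ℝ) = 0 ↔ v ∈ S)}
        = {p : EuclideanSpace ℝ ι | (inner ℝ v p : ℝ) = 0}ᶜ := by
      ext p; simp [hv]
    rw [this]
    exact ((isClosed_eq (Continuous.inner continuous_const continuous_id)
      continuous_const).measurableSet).compl

theorem measurableSet_faceEvent (s : Finset (EuclideanSpace ℝ ι)) (j : ℕ) :
    MeasurableSet (faceEvent (coneOf s) j) := by
  rw [faceEvent_eq]
  exact (projPt_lipschitz ⟨0, zero_mem_coneOf s⟩ (coneOf_closed s)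
    (coneOf_convex s)).continuous.measurable (measurableSet_dimSet s j)

end

section


variable {ι₁ ι₂ : Type*} [Fintype ι₁] [Fintype ι₂]

/-- first-block restriction -/
def fst' (x : EuclideanSpace ℝ (ι₁ ⊕ ι₂)) : EuclideanSpace ℝ ι₁ := WithLp.toLp 2 (fun i => x (Sum.inl i))
/-- second-block restriction -/
def snd' (x : EuclideanSpace ℝ (ι₁ ⊕ ι₂)) : EuclideanSpace ℝ ι₂ := WithLp.toLp 2 (fun i => x (Sum.inr i))

/-- the product cone -/
def prodCone (C₁ : Set (EuclideanSpace ℝ ι₁)) (C₂ : Set (EuclideanSpace ℝ ι₂)) :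
    Set (EuclideanSpace ℝ (ι₁ ⊕ ι₂)) :=
  {x | fst' x ∈ C₁ ∧ snd' x ∈ C₂}

theorem inner_inlMap (v : EuclideanSpace ℝ ι₁) (x : EuclideanSpace ℝ (ι₁ ⊕ ι₂)) :
    (inner ℝ (inlMap ι₁ ι₂ v) x : ℝ) = inner ℝ v (fst' x) := by
  rw [PiLp.inner_apply, PiLp.inner_apply, Fintype.sum_sum_type]
  simp [inlMap, fst']

theorem inner_inrMap (v : EuclideanSpace ℝ ι₂) (x : EuclideanSpace ℝ (ι₁ ⊕ ι₂)) :
    (inner ℝ (inrMap ι₁ ι₂ v) x : ℝ) = inner ℝ v (snd' x) := by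
  rw [PiLp.inner_apply, PiLp.inner_apply, Fintype.sum_sum_type]
  simp [inrMap, snd']

open scoped Classical in
/-- the constraint set for the product cone -/
noncomputable def sProd (s₁ : Finset (EuclideanSpace ℝ ι₁)) (s₂ : Finset (EuclideanSpace ℝ ι₂)) :
    Finset (EuclideanSpace ℝ (ι₁ ⊕ ι₂)) :=
  s₁.image (inlMap ι₁ ι₂) ∪ s₂.image (inrMap ι₁ ι₂)

theorem mem_sProd_iff {s₁ : Finset (EuclideanSpace ℝ ι₁)} {s₂ : Finset (EuclideanSpace ℝ ι₂)}
    {v : EuclideanSpace ℝ (ι₁ ⊕ ι₂)} :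
    v ∈ sProd s₁ s₂ ↔ (∃ w ∈ s₁, inlMap ι₁ ι₂ w = v) ∨ ∃ w ∈ s₂, inrMap ι₁ ι₂ w = v := by
  classical
  simp [sProd, Finset.mem_union, Finset.mem_image]

theorem coneOf_sProd (s₁ : Finset (EuclideanSpace ℝ ι₁)) (s₂ : Finset (EuclideanSpace ℝ ι₂)) :
    coneOf (sProd s₁ s₂) = prodCone (coneOf s₁) (coneOf s₂) := by
  ext x
  constructor
  · intro h
    refine ⟨fun v hv => ?_, fun v hv => ?_⟩
    · rw [← inner_inlMap]
      exact h _ (mem_sProd_iff.2 (Or.inl ⟨v, hv, rfl⟩))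
    · rw [← inner_inrMap]
      exact h _ (mem_sProd_iff.2 (Or.inr ⟨v, hv, rfl⟩))
  · rintro ⟨h1, h2⟩ v hv
    rcases mem_sProd_iff.1 hv with ⟨w, hw, rfl⟩ | ⟨w, hw, rfl⟩
    · rw [inner_inlMap]; exact h1 w hw
    · rw [inner_inrMap]; exact h2 w hw

theorem Fface_sProd (s₁ : Finset (EuclideanSpace ℝ ι₁)) (s₂ : Finset (EuclideanSpace ℝ ι₂))
    (p : EuclideanSpace ℝ (ι₁ ⊕ ι₂)) :
    Fface (sProd s₁ s₂) p
      = {x | fst' x ∈ Fface s₁ (fst' p) ∧ snd' x ∈ Fface s₂ (snd' p)} := by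
  ext x
  constructor
  · rintro ⟨h1, h2⟩
    refine ⟨⟨fun v hv => ?_, fun v hv hvp => ?_⟩, ⟨fun v hv => ?_, fun v hv hvp => ?_⟩⟩
    · rw [← inner_inlMap]; exact h1 _ (mem_sProd_iff.2 (Or.inl ⟨v, hv, rfl⟩))
    · rw [← inner_inlMap]
      exact h2 _ (mem_sProd_iff.2 (Or.inl ⟨v, hv, rfl⟩)) (by rw [inner_inlMap]; exact hvp)
    · rw [← inner_inrMap]; exact h1 _ (mem_sProd_iff.2 (Or.inr ⟨v, hv, rfl⟩))
    · rw [← inner_inrMap]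
      exact h2 _ (mem_sProd_iff.2 (Or.inr ⟨v, hv, rfl⟩)) (by rw [inner_inrMap]; exact hvp)
  · rintro ⟨⟨h1l, h2l⟩, ⟨h1r, h2r⟩⟩
    constructor
    · intro v hv
      rcases mem_sProd_iff.1 hv with ⟨w, hw, rfl⟩ | ⟨w, hw, rfl⟩
      · rw [inner_inlMap]; exact h1l w hw
      · rw [inner_inrMap]; exact h1r w hw
    · intro v hv hvp
      rcases mem_sProd_iff.1 hv with ⟨w, hw, rfl⟩ | ⟨w, hw, rfl⟩
      · rw [inner_inlMap]
        exact h2l w hw (by rw [← inner_inlMap]; exact hvp)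
      · rw [inner_inrMap]
        exact h2r w hw (by rw [← inner_inrMap]; exact hvp)

theorem dist_sq_split (x y : EuclideanSpace ℝ (ι₁ ⊕ ι₂)) :
    dist x y ^ 2 = dist (fst' x) (fst' y) ^ 2 + dist (snd' x) (snd' y) ^ 2 := by
  rw [EuclideanSpace.dist_eq, EuclideanSpace.dist_eq, EuclideanSpace.dist_eq]
  rw [Real.sq_sqrt (Finset.sum_nonneg fun _ _ => sq_nonneg _),
    Real.sq_sqrt (Finset.sum_nonneg fun _ _ => sq_nonneg _),
    Real.sq_sqrt (Finset.sum_nonneg fun _ _ => sq_nonneg _)]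
  rw [Fintype.sum_sum_type]
  rfl

/-- combine two block vectors -/
def combine (a : EuclideanSpace ℝ ι₁) (b : EuclideanSpace ℝ ι₂) :
    EuclideanSpace ℝ (ι₁ ⊕ ι₂) := WithLp.toLp 2 (Sum.elim a.ofLp b.ofLp)

theorem projPt_prodCone {C₁ : Set (EuclideanSpace ℝ ι₁)} {C₂ : Set (EuclideanSpace ℝ ι₂)}
    (hne₁ : C₁.Nonempty) (hcl₁ : IsClosed C₁) (hco₁ : Convex ℝ C₁)
    (hne₂ : C₂.Nonempty) (hcl₂ : IsClosed C₂) (hco₂ : Convex ℝ C₂)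
    (hneP : (prodCone C₁ C₂).Nonempty) (hclP : IsClosed (prodCone C₁ C₂))
    (hcoP : Convex ℝ (prodCone C₁ C₂)) (g : EuclideanSpace ℝ (ι₁ ⊕ ι₂)) :
    projPt (prodCone C₁ C₂) g = combine (projPt C₁ (fst' g)) (projPt C₂ (snd' g)) := by
  obtain ⟨hm₁, hmin₁⟩ := projPt_spec hne₁ hcl₁ hco₁ (fst' g)
  obtain ⟨hm₂, hmin₂⟩ := projPt_spec hne₂ hcl₂ hco₂ (snd' g)
  set p := combine (projPt C₁ (fst' g)) (projPt C₂ (snd' g)) with hp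
  have hfst : fst' p = projPt C₁ (fst' g) := rfl
  have hsnd : snd' p = projPt C₂ (snd' g) := rfl
  apply projPt_eq hneP hclP hcoP
  · exact ⟨by rw [hfst]; exact hm₁, by rw [hsnd]; exact hm₂⟩
  · intro y hy
    have h1 : dist (fst' g) (fst' p) ≤ dist (fst' g) (fst' y) := by
      rw [hfst]; exact hmin₁ _ hy.1
    have h2 : dist (snd' g) (snd' p) ≤ dist (snd' g) (snd' y) := by
      rw [hsnd]; exact hmin₂ _ hy.2
    have hsq : dist g p ^ 2 ≤ dist g y ^ 2 := by
      rw [dist_sq_split, dist_sq_split]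
      have e1 : dist (fst' g) (fst' p) ^ 2 ≤ dist (fst' g) (fst' y) ^ 2 :=
        pow_le_pow_left₀ dist_nonneg h1 2
      have e2 : dist (snd' g) (snd' p) ^ 2 ≤ dist (snd' g) (snd' y) ^ 2 :=
        pow_le_pow_left₀ dist_nonneg h2 2
      linarith
    nlinarith [dist_nonneg (x := g) (y := p), dist_nonneg (x := g) (y := y)]

theorem finrank_prodSet' {A : Set (EuclideanSpace ℝ ι₁)} {B : Set (EuclideanSpace ℝ ι₂)}
    (h0A : (0 : EuclideanSpace ℝ ι₁) ∈ A) (h0B : (0 : EuclideanSpace ℝ ι₂) ∈ B) :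
    finrank ℝ (vectorSpan ℝ {x : EuclideanSpace ℝ (ι₁ ⊕ ι₂) | fst' x ∈ A ∧ snd' x ∈ B})
      = finrank ℝ (vectorSpan ℝ A) + finrank ℝ (vectorSpan ℝ B) :=
  finrank_prodSet h0A h0B

theorem faceEvent_prodCone (s₁ : Finset (EuclideanSpace ℝ ι₁))
    (s₂ : Finset (EuclideanSpace ℝ ι₂)) (j : ℕ) :
    faceEvent (prodCone (coneOf s₁) (coneOf s₂)) j =
      ⋃ i ∈ Finset.range (j + 1),
        {g : EuclideanSpace ℝ (ι₁ ⊕ ι₂) | fst' g ∈ faceEvent (coneOf s₁) i ∧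
          snd' g ∈ faceEvent (coneOf s₂) (j - i)} := by
  rw [← coneOf_sProd]
  ext g
  rw [faceEvent_eq]
  have hP : projPt (coneOf (sProd s₁ s₂)) g
      = combine (projPt (coneOf s₁) (fst' g)) (projPt (coneOf s₂) (snd' g)) := by
    have h := projPt_prodCone (C₁ := coneOf s₁) (C₂ := coneOf s₂)
      ⟨0, zero_mem_coneOf s₁⟩ (coneOf_closed s₁) (coneOf_convex s₁)
      ⟨0, zero_mem_coneOf s₂⟩ (coneOf_closed s₂) (coneOf_convex s₂)
      (by rw [← coneOf_sProd]; exact ⟨0, zero_mem_coneOf _⟩)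
      (by rw [← coneOf_sProd]; exact coneOf_closed _)
      (by rw [← coneOf_sProd]; exact coneOf_convex _) g
    rw [← coneOf_sProd] at h
    exact h
  have hrank : finrank ℝ (vectorSpan ℝ (Fface (sProd s₁ s₂) (projPt (coneOf (sProd s₁ s₂)) g)))
      = finrank ℝ (vectorSpan ℝ (Fface s₁ (projPt (coneOf s₁) (fst' g))))
        + finrank ℝ (vectorSpan ℝ (Fface s₂ (projPt (coneOf s₂) (snd' g)))) := by
    rw [hP, Fface_sProd]
    have e1 : fst' (combine (projPt (coneOf s₁) (fst' g)) (projPt (coneOf s₂) (snd' g)))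
        = projPt (coneOf s₁) (fst' g) := rfl
    have e2 : snd' (combine (projPt (coneOf s₁) (fst' g)) (projPt (coneOf s₂) (snd' g)))
        = projPt (coneOf s₂) (snd' g) := rfl
    rw [e1, e2]
    exact finrank_prodSet' (zero_mem_Fface s₁ _) (zero_mem_Fface s₂ _)
  simp only [Set.mem_setOf_eq, Set.mem_iUnion, Finset.mem_range]
  rw [hrank]
  constructor
  · intro h
    refine ⟨finrank ℝ (vectorSpan ℝ (Fface s₁ (projPt (coneOf s₁) (fst' g)))), by omega, ?_, ?_⟩
    · rw [faceEvent_eq]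
      exact rfl
    · rw [faceEvent_eq]
      show finrank ℝ (vectorSpan ℝ (Fface s₂ (projPt (coneOf s₂) (snd' g)))) = _
      omega
  · rintro ⟨i, hi, h1, h2⟩
    rw [faceEvent_eq] at h1 h2
    have e1 : finrank ℝ (vectorSpan ℝ (Fface s₁ (projPt (coneOf s₁) (fst' g)))) = i := h1
    have e2 : finrank ℝ (vectorSpan ℝ (Fface s₂ (projPt (coneOf s₂) (snd' g)))) = j - i := h2
    omega

end

section
variable {ι₁ ι₂ : Type*} [Fintype ι₁] [Fintype ι₂]

instance stdGaussian_prob (ι : Type*) [Fintype ι] : IsProbabilityMeasure (stdGaussian ι) := by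
  unfold stdGaussian
  exact Measure.isProbabilityMeasure_map (MeasurableEquiv.measurable _).aemeasurable

theorem measurable_fst' : Measurable (fst' (ι₁ := ι₁) (ι₂ := ι₂)) := by
  unfold fst'; fun_prop

theorem measurable_snd' : Measurable (snd' (ι₁ := ι₁) (ι₂ := ι₂)) := by
  unfold snd'; fun_prop

theorem map_stdGaussian_split :
    Measure.map (fun g => (fst' g, snd' g)) (stdGaussian (ι₁ ⊕ ι₂))
      = (stdGaussian ι₁).prod (stdGaussian ι₂) := by
  have hψ : Measurable (fun g : EuclideanSpace ℝ (ι₁ ⊕ ι₂) => (fst' g, snd' g)) :=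
    measurable_fst'.prodMk measurable_snd'
  unfold stdGaussian
  rw [Measure.map_map hψ (MeasurableEquiv.measurable _)]
  have hsum := measurePreserving_sumPiEquivProdPi_symm
    (X := fun _ : ι₁ ⊕ ι₂ => ℝ) (fun _ => ProbabilityTheory.gaussianReal 0 1)
  rw [← hsum.map_eq]
  rw [Measure.map_map (by exact hψ.comp (MeasurableEquiv.measurable _))
    (MeasurableEquiv.measurable _)]
  have hfun : ((fun g : EuclideanSpace ℝ (ι₁ ⊕ ι₂) => (fst' g, snd' g))
        ∘ ⇑(MeasurableEquiv.toLp 2 (ι₁ ⊕ ι₂ → ℝ)))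
        ∘ ⇑(MeasurableEquiv.sumPiEquivProdPi fun _ : ι₁ ⊕ ι₂ => ℝ).symm
      = Prod.map (⇑(MeasurableEquiv.toLp 2 (ι₁ → ℝ)))
          (⇑(MeasurableEquiv.toLp 2 (ι₂ → ℝ))) := by
    funext ab
    rfl
  rw [hfun]
  have h1 : MeasurePreserving (⇑(MeasurableEquiv.toLp 2 (ι₁ → ℝ)))
      (Measure.pi fun _ : ι₁ => ProbabilityTheory.gaussianReal 0 1) (stdGaussian ι₁) :=
    ⟨MeasurableEquiv.measurable _, rfl⟩
  have h2 : MeasurePreserving (⇑(MeasurableEquiv.toLp 2 (ι₂ → ℝ)))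
      (Measure.pi fun _ : ι₂ => ProbabilityTheory.gaussianReal 0 1) (stdGaussian ι₂) :=
    ⟨MeasurableEquiv.measurable _, rfl⟩
  exact (h1.prod h2).map_eq

end

/-- For polyhedral closed convex cones `C₁ ⊆ ℝ^{n₁}`, `C₂ ⊆ ℝ^{n₂}` with `n₁ + n₂ = n ≥ 2`,
the intrinsic volumes of the product cone satisfy the convolution identity
`V_j(C₁ × C₂) = Σ_{i=0}^j V_i(C₁) V_{j−i}(C₂)` for `0 ≤ j ≤ n`. -/
theorem intrinsic_volumes_product (n n₁ n₂ : ℕ) (hn : 2 ≤ n) (hsum : n₁ + n₂ = n)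
    (C₁ : Set (EuclideanSpace ℝ (Fin n₁))) (C₂ : Set (EuclideanSpace ℝ (Fin n₂)))
    (h₁ : IsPolyhedralCone C₁) (h₂ : IsPolyhedralCone C₂)
    (h₁c : IsClosed C₁ ∧ Convex ℝ C₁ ∧ ∀ (c : ℝ), 0 < c → ∀ x ∈ C₁, c • x ∈ C₁)
    (h₂c : IsClosed C₂ ∧ Convex ℝ C₂ ∧ ∀ (c : ℝ), 0 < c → ∀ x ∈ C₂, c • x ∈ C₂)
    (j : ℕ) (hj : j ≤ n) :
    polyV j {x : EuclideanSpace ℝ (Fin n₁ ⊕ Fin n₂) |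
        (WithLp.toLp 2 (fun i => x (Sum.inl i)) : EuclideanSpace ℝ (Fin n₁)) ∈ C₁ ∧
        (WithLp.toLp 2 (fun i => x (Sum.inr i)) : EuclideanSpace ℝ (Fin n₂)) ∈ C₂} =
      ∑ i ∈ range (j + 1), polyV i C₁ * polyV (j - i) C₂ := by
  classical
  obtain ⟨s₁, hs₁⟩ := h₁
  obtain ⟨s₂, hs₂⟩ := h₂
  have hC₁ : C₁ = coneOf s₁ := hs₁
  have hC₂ : C₂ = coneOf s₂ := hs₂
  subst hC₁
  subst hC₂
  show polyV j (prodCone (coneOf s₁) (coneOf s₂)) = _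
  unfold polyV
  rw [faceEvent_prodCone]
  set ψ : EuclideanSpace ℝ (Fin n₁ ⊕ Fin n₂) →
      EuclideanSpace ℝ (Fin n₁) × EuclideanSpace ℝ (Fin n₂) :=
    fun g => (fst' g, snd' g) with hψdef
  have hψ : Measurable ψ := measurable_fst'.prodMk measurable_snd'
  have hpre : ∀ i : ℕ, {g : EuclideanSpace ℝ (Fin n₁ ⊕ Fin n₂) |
      fst' g ∈ faceEvent (coneOf s₁) i ∧ snd' g ∈ faceEvent (coneOf s₂) (j - i)}
      = ψ ⁻¹' ((faceEvent (coneOf s₁) i) ×ˢ (faceEvent (coneOf s₂) (j - i))) :=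
    fun i => rfl
  have hmeas : ∀ i : ℕ, i ∈ range (j+1) → MeasurableSet (ψ ⁻¹'
      ((faceEvent (coneOf s₁) i) ×ˢ (faceEvent (coneOf s₂) (j - i)))) := by
    intro i _
    exact hψ ((measurableSet_faceEvent s₁ i).prod (measurableSet_faceEvent s₂ (j - i)))
  have hdisj : Set.PairwiseDisjoint (↑(range (j+1))) (fun i : ℕ => ψ ⁻¹'
      ((faceEvent (coneOf s₁) i) ×ˢ (faceEvent (coneOf s₂) (j - i)))) := by
    intro a _ b _ hab
    refine Set.disjoint_left.2 fun g hga hgb => hab ?_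
    have h1 : fst' g ∈ faceEvent (coneOf s₁) a := hga.1
    have h2 : fst' g ∈ faceEvent (coneOf s₁) b := hgb.1
    rw [faceEvent_eq] at h1 h2
    have e1 : finrank ℝ (vectorSpan ℝ (Fface s₁ (projPt (coneOf s₁) (fst' g)))) = a := h1
    have e2 : finrank ℝ (vectorSpan ℝ (Fface s₁ (projPt (coneOf s₁) (fst' g)))) = b := h2
    omega
  have hunion : (⋃ i ∈ range (j+1), {g : EuclideanSpace ℝ (Fin n₁ ⊕ Fin n₂) |
      fst' g ∈ faceEvent (coneOf s₁) i ∧ snd' g ∈ faceEvent (coneOf s₂) (j - i)})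
      = ⋃ i ∈ range (j+1), ψ ⁻¹'
        ((faceEvent (coneOf s₁) i) ×ˢ (faceEvent (coneOf s₂) (j - i))) := by
    refine Set.iUnion₂_congr fun i _ => hpre i
  rw [hunion, measure_biUnion_finset hdisj hmeas]
  have hterm : ∀ i : ℕ, stdGaussian (Fin n₁ ⊕ Fin n₂) (ψ ⁻¹'
      ((faceEvent (coneOf s₁) i) ×ˢ (faceEvent (coneOf s₂) (j - i))))
      = stdGaussian (Fin n₁) (faceEvent (coneOf s₁) i)
        * stdGaussian (Fin n₂) (faceEvent (coneOf s₂) (j - i)) := by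
    intro i
    rw [← Measure.map_apply hψ
      ((measurableSet_faceEvent s₁ i).prod (measurableSet_faceEvent s₂ (j - i)))]
    rw [map_stdGaussian_split, Measure.prod_prod]
  rw [ENNReal.toReal_sum (fun i _ => by
    rw [hterm i]
    exact ENNReal.mul_ne_top (measure_ne_top _ _) (measure_ne_top _ _))]
  refine Finset.sum_congr rfl fun i _ => ?_
  rw [hterm i, ENNReal.toReal_mul]
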